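/- Let p > 2 be real and let z ∈ ℝ^d have all coordinates nonzero. Then the function φ(z) = ‖z‖_p² is twice differentiable at z, and its Hessian matrix satisfies ∇²φ(z) = 2(p−1)‖z‖_p^{2−p} Diag(|z[1]|^{p−2}, …, |z[d]|^{p−2}) + 2(2−p)‖z‖_p^{2(1−p)} s(z) s(z)ᵀ, where s(z) ∈ ℝ^d is defined by s(z)[i] = |z[i]|^{p−2} z[i]. -/

import Mathlib

open scoped BigOperators
open scoped InnerProductSpace

/-- The `ℓ_p` "norm" on `ℝ^d` for a real exponent `p`. -/
noncomputable def pnorm (p : ℝ) {d : ℕ} (x : EuclideanSpace ℝ (Fin d)) : ℝ :=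
  (∑ i, |x i| ^ p) ^ (1 / p)

/-- The dual exponent `p* = p/(p-1)`, so that `1/p + 1/p* = 1`. -/
noncomputable def dualExp (p : ℝ) : ℝ := p / (p - 1)

section
variable {d : ℕ} {p : ℝ}

private lemma aux_abs_rpow {q t : ℝ} (ht : t ≠ 0) :
    HasDerivAt (fun s : ℝ => |s| ^ q) (q * |t| ^ (q - 2) * t) t := by
  have h1 : HasDerivAt (fun s : ℝ => |s| ^ q)
      ((q * |t| ^ (q - 1)) * (SignType.sign t : ℝ)) t := by
    have := (Real.hasDerivAt_rpow_const (p := q) (Or.inl (abs_ne_zero.2 ht))).comp t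
      (hasDerivAt_abs ht)
    simpa [Function.comp_def] using this
  convert h1 using 1
  have habs : (0:ℝ) < |t| := abs_pos.2 ht
  have h2 : |t| ^ (q - 1) = |t| ^ (q - 2) * |t| := by
    rw [← Real.rpow_add_one habs.ne' (q - 2)]; ring_nf
  rw [h2]
  linear_combination (-(q * |t| ^ (q - 2))) * (abs_mul_sign t)

private lemma aux_abs_rpow_mul {q t : ℝ} (ht : t ≠ 0) :
    HasDerivAt (fun s : ℝ => |s| ^ q * s) ((q + 1) * |t| ^ q) t := by
  have h := (aux_abs_rpow (q := q) ht).mul (hasDerivAt_id t)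
  have habs : (0:ℝ) < |t| := abs_pos.2 ht
  have h2 : |t| ^ (q - 2) * t * t = |t| ^ q := by
    have h3 : t * t = |t| ^ (2:ℝ) := by
      rw [show ((2:ℝ)) = ((2:ℕ):ℝ) by norm_num, Real.rpow_natCast, sq_abs]; ring
    rw [mul_assoc, h3, ← Real.rpow_add habs]; ring_nf
  refine h.congr_deriv ?_
  simp only [id_eq, mul_one]
  linear_combination q * h2

private lemma hasFDerivAt_gsum {w : EuclideanSpace ℝ (Fin d)}
    (hw : ∀ i, w i ≠ 0) :
    HasFDerivAt (fun u : EuclideanSpace ℝ (Fin d) => ∑ i, |u i| ^ p)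
      (∑ i, (p * |w i| ^ (p - 2) * w i) •
        (EuclideanSpace.proj i : EuclideanSpace ℝ (Fin d) →L[ℝ] ℝ)) w := by
  refine HasFDerivAt.fun_sum fun i _ => ?_
  have := (aux_abs_rpow (q := p) (hw i)).comp_hasFDerivAt w
    ((EuclideanSpace.proj i (𝕜 := ℝ)).hasFDerivAt)
  simpa [Function.comp_def] using this

/-- The rescaled gradient vector. -/
noncomputable def sgrad (p : ℝ) {d : ℕ} (w : EuclideanSpace ℝ (Fin d)) :
    EuclideanSpace ℝ (Fin d) :=
  WithLp.toLp 2 (fun i => |w i| ^ (p - 2) * w i)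

/-- The candidate gradient-map. -/
noncomputable def Fmap (p : ℝ) {d : ℕ} (w : EuclideanSpace ℝ (Fin d)) :
    EuclideanSpace ℝ (Fin d) →L[ℝ] ℝ :=
  (2 * (∑ i, |w i| ^ p) ^ (2 / p - 1)) • innerSL ℝ (sgrad p w)

variable (hp : 2 < p)
include hp

private lemma pnorm_sq_eq (u : EuclideanSpace ℝ (Fin d)) :
    pnorm p u ^ 2 = (∑ i, |u i| ^ p) ^ (2 / p) := by
  have hgnn : (0:ℝ) ≤ ∑ i, |u i| ^ p :=
    Finset.sum_nonneg fun i _ => Real.rpow_nonneg (abs_nonneg _) _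
  rw [pnorm, ← Real.rpow_natCast ((∑ i, |u i| ^ p) ^ (1 / p)) 2, ← Real.rpow_mul hgnn]
  norm_num
  rw [inv_mul_eq_div]

private lemma gsum_pos [Nonempty (Fin d)] {w : EuclideanSpace ℝ (Fin d)} (hw : ∀ i, w i ≠ 0) :
    (0:ℝ) < ∑ i, |w i| ^ p :=
  Finset.sum_pos (fun i _ => Real.rpow_pos_of_pos (abs_pos.2 (hw i)) p) Finset.univ_nonempty

private lemma hasFDerivAt_pnorm_sq [Nonempty (Fin d)] {w : EuclideanSpace ℝ (Fin d)}
    (hw : ∀ i, w i ≠ 0) :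
    HasFDerivAt (fun u : EuclideanSpace ℝ (Fin d) => pnorm p u ^ 2) (Fmap p w) w := by
  have hgpos := gsum_pos hp hw
  have hr : HasDerivAt (fun x : ℝ => x ^ (2 / p))
      ((2 / p) * (∑ i, |w i| ^ p) ^ (2 / p - 1)) (∑ i, |w i| ^ p) :=
    Real.hasDerivAt_rpow_const (Or.inl hgpos.ne')
  have h := hr.comp_hasFDerivAt w (hasFDerivAt_gsum hw)
  have heq : (fun u : EuclideanSpace ℝ (Fin d) => pnorm p u ^ 2)
      = (fun x : ℝ => x ^ (2 / p)) ∘ (fun u => ∑ i, |u i| ^ p) :=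
    funext fun u => pnorm_sq_eq hp u
  rw [heq]
  refine h.congr_fderiv ?_
  ext v
  simp only [Fmap, ContinuousLinearMap.smul_apply, innerSL_apply_apply, PiLp.inner_apply,
    RCLike.inner_apply, conj_trivial, ContinuousLinearMap.coe_smul', Pi.smul_apply,
    ContinuousLinearMap.coe_sum', Finset.sum_apply, PiLp.proj_apply, smul_eq_mul, sgrad]
  rw [Finset.mul_sum, Finset.mul_sum]
  refine Finset.sum_congr rfl fun i _ => ?_
  have hp0 : p ≠ 0 := by positivity
  field_simp
end

section
variable {d : ℕ} {p : ℝ} (hp : 2 < p)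
include hp

private lemma diff_Fmap [Nonempty (Fin d)] {z : EuclideanSpace ℝ (Fin d)}
    (hz : ∀ i, z i ≠ 0) :
    DifferentiableAt ℝ (fun w => Fmap p w) z := by
  have hgd : DifferentiableAt ℝ (fun u : EuclideanSpace ℝ (Fin d) => ∑ i, |u i| ^ p) z :=
    (hasFDerivAt_gsum hz).differentiableAt
  have hc : DifferentiableAt ℝ
      (fun w : EuclideanSpace ℝ (Fin d) => 2 * (∑ i, |w i| ^ p) ^ (2 / p - 1)) z :=
    (hgd.rpow_const (Or.inl (gsum_pos hp hz).ne')).const_mul 2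
  have hpi : DifferentiableAt ℝ
      (fun w : EuclideanSpace ℝ (Fin d) => (fun i => |w i| ^ (p - 2) * w i : ∀ _ : Fin d, ℝ)) z := by
    rw [differentiableAt_pi]
    intro i
    have := ((aux_abs_rpow_mul (q := p - 2) (hz i)).differentiableAt).comp z
      (EuclideanSpace.proj i (𝕜 := ℝ)).differentiableAt
    simpa [Function.comp_def] using this
  have hsg : DifferentiableAt ℝ (fun w : EuclideanSpace ℝ (Fin d) => sgrad p w) z :=
    ((PiLp.continuousLinearEquiv 2 ℝ (fun _ : Fin d => ℝ)).symm.differentiableAt).comp z hpi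
  have hL : DifferentiableAt ℝ
      (fun w : EuclideanSpace ℝ (Fin d) => innerSL ℝ (sgrad p w)) z :=
    ((innerSL ℝ (E := EuclideanSpace ℝ (Fin d))).differentiableAt).comp z hsg
  simp only [Fmap]
  exact hc.smul hL
end
theorem stmt16 {d : ℕ} (p : ℝ) (hp : 2 < p)
    (z : EuclideanSpace ℝ (Fin d)) (hz : ∀ i, z i ≠ 0) :
    (∀ᶠ w in nhds z, DifferentiableAt ℝ (fun w : EuclideanSpace ℝ (Fin d) => pnorm p w ^ 2) w) ∧
    DifferentiableAt ℝ
      (fun w : EuclideanSpace ℝ (Fin d) =>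
        fderiv ℝ (fun u : EuclideanSpace ℝ (Fin d) => pnorm p u ^ 2) w) z ∧
    ∀ i j : Fin d,
      fderiv ℝ (fun w : EuclideanSpace ℝ (Fin d) =>
          fderiv ℝ (fun u : EuclideanSpace ℝ (Fin d) => pnorm p u ^ 2) w
            (EuclideanSpace.single j 1)) z (EuclideanSpace.single i 1) =
        2 * (p - 1) * pnorm p z ^ (2 - p) * (if i = j then |z i| ^ (p - 2) else 0) +
        2 * (2 - p) * pnorm p z ^ (2 * (1 - p)) *
          (|z i| ^ (p - 2) * z i) * (|z j| ^ (p - 2) * z j) := by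
  have hp0 : p ≠ 0 := by positivity
  rcases eq_or_ne d 0 with hd | hd
  · subst hd
    have hφ : (fun w : EuclideanSpace ℝ (Fin 0) => pnorm p w ^ 2) = fun _ => 0 := by
      funext w
      simp [pnorm, Real.zero_rpow (one_div_ne_zero hp0)]
      exact Real.zero_rpow (inv_ne_zero hp0)
    refine ⟨Filter.Eventually.of_forall fun w => ?_, ?_, fun i => i.elim0⟩
    · rw [hφ]; exact differentiableAt_const _
    · rw [hφ]
      simp only [fderiv_fun_const, Pi.zero_apply]
      exact differentiableAt_const _
  · haveI : Nonempty (Fin d) := ⟨⟨0, Nat.pos_of_ne_zero hd⟩⟩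
    -- the open set where all coordinates are nonzero
    have hUopen : IsOpen {w : EuclideanSpace ℝ (Fin d) | ∀ i, w i ≠ 0} := by
      rw [show {w : EuclideanSpace ℝ (Fin d) | ∀ i, w i ≠ 0}
          = ⋂ i, {w : EuclideanSpace ℝ (Fin d) | w i ≠ 0} from by ext w; simp]
      exact isOpen_iInter_of_finite fun i =>
        isOpen_ne.preimage (EuclideanSpace.proj i (𝕜 := ℝ)).continuous
    have hnhds : {w : EuclideanSpace ℝ (Fin d) | ∀ i, w i ≠ 0} ∈ nhds z :=
      hUopen.mem_nhds hz
    have hfd : (fun w => fderiv ℝ (fun u : EuclideanSpace ℝ (Fin d) => pnorm p u ^ 2) w)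
        =ᶠ[nhds z] fun w => Fmap p w :=
      Filter.eventually_of_mem hnhds fun w hw => (hasFDerivAt_pnorm_sq hp hw).fderiv
    refine ⟨Filter.eventually_of_mem hnhds
        (fun w hw => (hasFDerivAt_pnorm_sq hp hw).differentiableAt), ?_, ?_⟩
    · exact hfd.differentiableAt_iff.2 (diff_Fmap hp hz)
    · intro i j
      have hev : (fun w => fderiv ℝ (fun u : EuclideanSpace ℝ (Fin d) => pnorm p u ^ 2) w
            (EuclideanSpace.single j 1))
          =ᶠ[nhds z] fun w => Fmap p w (EuclideanSpace.single j 1) := by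
        filter_upwards [hfd] with w hw
        rw [hw]
      rw [hev.fderiv_eq]
      -- explicit formula for `Fmap p w` applied to a basis vector
      have happ : (fun w : EuclideanSpace ℝ (Fin d) => Fmap p w (EuclideanSpace.single j 1))
          = fun w => (2 * (∑ k, |w k| ^ p) ^ (2 / p - 1)) * (|w j| ^ (p - 2) * w j) := by
        funext w
        simp [Fmap, sgrad, PiLp.inner_apply, RCLike.inner_apply,
          EuclideanSpace.single_apply, mul_ite]
      rw [happ]
      -- derivative of the scalar coefficient
      have hgz : (0:ℝ) < ∑ k, |z k| ^ p := gsum_pos hp hz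
      have hcd : HasFDerivAt
          (fun w : EuclideanSpace ℝ (Fin d) => 2 * (∑ k, |w k| ^ p) ^ (2 / p - 1))
          ((2:ℝ) • (((2 / p - 1) * (∑ k, |z k| ^ p) ^ (2 / p - 1 - 1)) •
            (∑ k, (p * |z k| ^ (p - 2) * z k) •
              (EuclideanSpace.proj k : EuclideanSpace ℝ (Fin d) →L[ℝ] ℝ)))) z :=
        by
          have h0 := (Real.hasDerivAt_rpow_const (p := 2 / p - 1)
            (Or.inl hgz.ne')).comp_hasFDerivAt z (hasFDerivAt_gsum hz)
          exact h0.const_mul 2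
      have hm : HasFDerivAt (fun w : EuclideanSpace ℝ (Fin d) => |w j| ^ (p - 2) * w j)
          (((p - 2 + 1) * |z j| ^ (p - 2)) •
            (EuclideanSpace.proj j : EuclideanSpace ℝ (Fin d) →L[ℝ] ℝ)) z := by
        have := (aux_abs_rpow_mul (q := p - 2) (hz j)).comp_hasFDerivAt z
          (EuclideanSpace.proj j (𝕜 := ℝ)).hasFDerivAt
        simpa [Function.comp_def] using this
      have hprod := hcd.fun_mul hm
      rw [hprod.fderiv]
      -- evaluate
      simp only [ContinuousLinearMap.add_apply, ContinuousLinearMap.smul_apply,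
        ContinuousLinearMap.coe_sum', Finset.sum_apply, PiLp.proj_apply,
        EuclideanSpace.single_apply, smul_eq_mul, mul_ite, mul_one, mul_zero,
        Finset.sum_ite_eq, Finset.sum_ite_eq', Finset.mem_univ, if_true]
      -- rewrite pnorm powers
      have hgnn : (0:ℝ) ≤ ∑ k, |z k| ^ p := hgz.le
      have hpn1 : pnorm p z ^ (2 - p) = (∑ k, |z k| ^ p) ^ (2 / p - 1) := by
        rw [pnorm, ← Real.rpow_mul hgnn]
        congr 1
        field_simp
      have hpn2 : pnorm p z ^ (2 * (1 - p)) = (∑ k, |z k| ^ p) ^ (2 / p - 1 - 1) := by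
        rw [pnorm, ← Real.rpow_mul hgnn]
        congr 1
        field_simp
        ring
      rw [hpn1, hpn2]
      by_cases hij : i = j
      · subst hij
        simp only [if_true]
        field_simp
        ring
      · simp only [hij, if_false]
        have hij' : ¬ (j = i) := fun h => hij h.symm
        simp only [hij', if_false]
        field_simp
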